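/- In the Gel'fand–Dickey setting, for matrix liftings V, W ∈ Γ_Q with associated first-row operators E = −Σ_j V^0_j ∂^j and F = −Σ_j W^0_j ∂^j, the matrix commutator corresponds to the operator commutator modulo L: −ψ([V,W]) = Σ_{l,j=0}^{n}(V^0_j W^j_l − W^0_j V^j_l)∂^l ≡ [E,F] mod right multiples of L, i.e., EF − FE − Σ_{l,j}(V^0_j W^j_l − W^0_j V^j_l)∂^l = RL for some differential operator R. -/

import Mathlib

/-!  A self-contained model of the algebra of pseudodifferential operators on the
circle (or over an abstract differential ring `(R, d)`).

A pseudodifferential operator `A = ∑_{i ≤ N} a_i ∂^i` is encoded by the sequence of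
its coefficients `A : ℤ → R` (`A i = a_i`, vanishing for large `i`).  The product is
the standard one, determined by the generalized Leibniz rule
`∂^i ∘ b = ∑_{k ≥ 0} C(i,k) b^{(k)} ∂^{i-k}` with generalized binomial coefficients
`C(i,k) = Ring.choose i k`. -/

noncomputable section

namespace GD

variable {R : Type} [CommRing R]

/-- Pseudodifferential operators encoded by coefficient sequences:
`A : ℤ → R` stands for `∑ i, (A i) ∂^i`. -/
abbrev PDO (R : Type) := ℤ → R

/-- The product of pseudodifferential operators, with respect to the derivation `d`
of the coefficient ring.  (The `finsum` is a finite sum whenever the two factors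
have bounded order, which is the case throughout.) -/
def pmul (d : R → R) (A B : PDO R) : PDO R :=
  fun m => ∑ᶠ p : ℤ × ℕ,
    (Ring.choose p.1 p.2 : ℤ) • (A p.1 * d^[p.2] (B (m - p.1 + (p.2 : ℤ))))

/-- The single-term operator `a ∂^j`. -/
def term (a : R) (j : ℤ) : PDO R := fun m => if m = j then a else 0

/-- The identity operator `1 = ∂^0`. -/
def one : PDO R := term (1 : R) 0

/-- The purely differential part `A₊` of a pseudodifferential operator
(the part with nonnegative powers of `∂`); `A₋ = A - A₊`. -/
def plus (A : PDO R) : PDO R := fun m => if 0 ≤ m then A m else 0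

/-- `d` is a derivation of `R`. -/
def IsDeriv (d : R → R) : Prop :=
  (∀ a b, d (a + b) = d a + d b) ∧ ∀ a b, d (a * b) = d a * b + a * d b

end GD


namespace GD

variable {R : Type} [CommRing R]

variable {d : R → R}

lemma d_zero (hd : IsDeriv d) : d 0 = 0 := by
  have h := hd.1 0 0
  rw [add_zero] at h
  have h2 : d 0 + 0 = d 0 + d 0 := by rw [add_zero]; exact h
  exact (add_left_cancel h2).symm

lemma d_one (hd : IsDeriv d) : d 1 = 0 := by
  have h := hd.2 1 1
  simp only [mul_one, one_mul] at h
  have h2 : d 1 + 0 = d 1 + d 1 := by rw [add_zero]; exact h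
  exact (add_left_cancel h2).symm

lemma d_neg (hd : IsDeriv d) (a : R) : d (-a) = - d a := by
  have h := hd.1 a (-a)
  rw [add_neg_cancel, d_zero hd] at h
  exact eq_neg_of_add_eq_zero_right h.symm

lemma d_iter_add (hd : IsDeriv d) (k : ℕ) (a b : R) :
    d^[k] (a + b) = d^[k] a + d^[k] b := by
  induction k generalizing a b with
  | zero => simp
  | succ k ih =>
      rw [Function.iterate_succ_apply, hd.1, ih, Function.iterate_succ_apply,
        Function.iterate_succ_apply]

lemma d_iter_zero (hd : IsDeriv d) (k : ℕ) : d^[k] (0 : R) = 0 := by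
  induction k with
  | zero => simp
  | succ k ih => rw [Function.iterate_succ_apply, d_zero hd, ih]
      -- note d^[k+1] 0 = d^[k] (d 0)

lemma d_iter_neg (hd : IsDeriv d) (k : ℕ) (a : R) : d^[k] (-a) = - d^[k] a := by
  induction k generalizing a with
  | zero => simp
  | succ k ih =>
      rw [Function.iterate_succ_apply, d_neg hd, ih, Function.iterate_succ_apply]

lemma d_zsmul (hd : IsDeriv d) (z : ℤ) (a : R) : d (z • a) = z • d a := by
  induction z using Int.induction_on with
  | zero => simp [d_zero hd]
  | succ i ih => rw [add_smul, one_smul, hd.1, ih, add_smul, one_smul]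
  | pred i ih => rw [sub_smul, one_smul, sub_eq_add_neg, hd.1, d_neg hd, ih, sub_smul, one_smul, sub_eq_add_neg]

lemma d_sum (hd : IsDeriv d) {α : Type*} (s : Finset α) (f : α → R) :
    d (∑ x ∈ s, f x) = ∑ x ∈ s, d (f x) := by
  classical
  induction s using Finset.induction_on with
  | empty => simp [d_zero hd]
  | insert _ _ h ih => rw [Finset.sum_insert h, hd.1, ih, Finset.sum_insert h]

/-- boundedness of a differential operator -/
def Bnd (A : PDO R) (N : ℕ) : Prop := ∀ m : ℤ, A m ≠ 0 → 0 ≤ m ∧ m ≤ N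

lemma pmul_eq_sum {A : PDO R} {N : ℕ} (hA : Bnd A N) (B : PDO R) (m : ℤ) :
    pmul d A B m =
      ∑ i ∈ Finset.range (N+1), ∑ k ∈ Finset.range (N+1),
        ((i.choose k : ℤ)) • (A (i:ℤ) * d^[k] (B (m - (i:ℤ) + (k:ℤ)))) := by
  classical
  have hsub : (Function.support fun p : ℤ × ℕ =>
      (Ring.choose p.1 p.2 : ℤ) • (A p.1 * d^[p.2] (B (m - p.1 + (p.2 : ℤ)))))
      ⊆ (((Finset.range (N+1)).image (Nat.cast : ℕ → ℤ)) ×ˢ Finset.range (N+1) : Finset (ℤ × ℕ)) := by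
    intro p hp
    simp only [Function.mem_support] at hp
    have hA1 : A p.1 ≠ 0 := by
      intro h; apply hp; rw [h, zero_mul, smul_zero]
    obtain ⟨h0, hN⟩ := hA p.1 hA1
    have hi : ∃ i : ℕ, i < N + 1 ∧ (i : ℤ) = p.1 := by
      refine ⟨p.1.toNat, ?_, Int.toNat_of_nonneg h0⟩
      omega
    obtain ⟨i, hiN, hieq⟩ := hi
    have hk : p.2 < N + 1 := by
      by_contra hk
      apply hp
      rw [← hieq, Ring.choose_natCast]
      have : i.choose p.2 = 0 := Nat.choose_eq_zero_of_lt (by omega)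
      rw [this]
      simp
    simp only [Finset.coe_product, Set.mem_prod, Finset.mem_coe, Finset.mem_image,
      Finset.mem_range]
    exact ⟨⟨i, hiN, hieq⟩, hk⟩
  rw [pmul, finsum_eq_sum_of_support_subset _ hsub]
  rw [Finset.sum_product]
  rw [Finset.sum_image (by intro a _ b _ h; exact_mod_cast h)]
  refine Finset.sum_congr rfl fun i _ => Finset.sum_congr rfl fun k _ => ?_
  rw [Ring.choose_natCast]


lemma Bnd.mono {A : PDO R} {N M : ℕ} (h : Bnd A N) (hNM : N ≤ M) : Bnd A M :=
  fun m hm => ⟨(h m hm).1, le_trans (h m hm).2 (by exact_mod_cast Int.ofNat_le.mpr hNM)⟩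

lemma Bnd_term (c : R) (j N : ℕ) (hj : j ≤ N) : Bnd (term c (j:ℤ)) N := by
  intro m hm
  simp only [term, ne_eq, ite_eq_right_iff, not_forall] at hm
  obtain ⟨h1, -⟩ := hm
  subst h1
  constructor <;> [positivity; exact_mod_cast hj]

lemma Bnd_zero (N : ℕ) : Bnd (0 : PDO R) N := fun m hm => absurd rfl hm

lemma Bnd_neg {A : PDO R} {N : ℕ} (h : Bnd A N) : Bnd (-A) N := by
  intro m hm
  exact h m (by simpa using hm)

lemma Bnd_add {A B : PDO R} {N : ℕ} (hA : Bnd A N) (hB : Bnd B N) : Bnd (A + B) N := by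
  intro m hm
  by_cases h1 : A m = 0
  · exact hB m (by
      intro h2; apply hm; show A m + B m = 0; rw [h1, h2, add_zero])
  · exact hA m h1

lemma Bnd_sub {A B : PDO R} {N : ℕ} (hA : Bnd A N) (hB : Bnd B N) : Bnd (A - B) N := by
  rw [sub_eq_add_neg]; exact Bnd_add hA (Bnd_neg hB)

lemma Bnd_sum {α : Type*} (s : Finset α) (A : α → PDO R) (N : ℕ)
    (h : ∀ x ∈ s, Bnd (A x) N) : Bnd (∑ x ∈ s, A x) N := by
  classical
  induction s using Finset.induction_on with
  | empty => simpa using Bnd_zero N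
  | @insert a s ha ih =>
      rw [Finset.sum_insert ha]
      exact Bnd_add (h a (Finset.mem_insert_self a s))
        (ih fun x hx => h x (Finset.mem_insert_of_mem hx))

lemma Bnd_scaled {A : PDO R} {N : ℕ} (c : R) (h : Bnd A N) :
    Bnd (fun m => c * A m) N := by
  intro m hm
  exact h m (by intro h0; apply hm; show c * A m = 0; rw [h0, mul_zero])

/-- evaluation of a finite sum of terms -/
lemma sum_term_apply (c : ℕ → R) (N : ℕ) (m : ℤ) :
    (∑ j ∈ Finset.range N, term (c j) (j:ℤ)) m
      = if 0 ≤ m ∧ m < N then c m.toNat else 0 := by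
  classical
  rw [Finset.sum_apply]
  by_cases h : 0 ≤ m ∧ m < N
  · rw [if_pos h]
    rw [Finset.sum_eq_single m.toNat]
    · simp [term, Int.toNat_of_nonneg h.1]
    · intro b _ hb
      simp only [term, ite_eq_right_iff]
      intro hmb; exfalso; apply hb; omega
    · intro hmem
      exfalso; apply hmem; rw [Finset.mem_range]; omega
  · rw [if_neg h]
    apply Finset.sum_eq_zero
    intro j hj
    rw [Finset.mem_range] at hj
    simp only [term, ite_eq_right_iff]
    intro hmj; exfalso; apply h; omega

lemma pmul_zero_left (B : PDO R) : pmul d (0 : PDO R) B = 0 := by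
  funext m
  simp [pmul]

lemma pmul_term0 (c : R) (X : PDO R) :
    pmul d (term c 0) X = fun m => c * X m := by
  funext m
  have hA : Bnd (term c (0:ℤ)) 0 := by simpa using Bnd_term c 0 0 le_rfl
  rw [pmul_eq_sum hA]
  simp [term]

lemma pmul_del (X : PDO R) (m : ℤ) :
    pmul d (term (1:R) 1) X m = X (m-1) + d (X m) := by
  have hA : Bnd (term (1:R) (1:ℤ)) 1 := by simpa using Bnd_term 1 1 1 le_rfl
  rw [pmul_eq_sum hA]
  simp [term, Finset.sum_range_succ]

lemma pmul_scaled_left {X : PDO R} {N : ℕ} (hX : Bnd X N) (c : R) (Y : PDO R) (m : ℤ) :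
    pmul d (fun m' => c * X m') Y m = c * pmul d X Y m := by
  rw [pmul_eq_sum (Bnd_scaled c hX), pmul_eq_sum hX, Finset.mul_sum]
  refine Finset.sum_congr rfl fun i _ => ?_
  rw [Finset.mul_sum]
  refine Finset.sum_congr rfl fun k _ => ?_
  rw [mul_smul_comm, mul_assoc]

lemma pmul_add_left {A A' : PDO R} {N : ℕ} (hA : Bnd A N) (hA' : Bnd A' N)
    (B : PDO R) (m : ℤ) :
    pmul d (A + A') B m = pmul d A B m + pmul d A' B m := by
  rw [pmul_eq_sum (Bnd_add hA hA'), pmul_eq_sum hA, pmul_eq_sum hA',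
    ← Finset.sum_add_distrib]
  refine Finset.sum_congr rfl fun i _ => ?_
  rw [← Finset.sum_add_distrib]
  refine Finset.sum_congr rfl fun k _ => ?_
  show (_:ℤ) • ((A i + A' i) * _) = _
  rw [add_mul, smul_add]

lemma pmul_neg_left {A : PDO R} {N : ℕ} (hA : Bnd A N) (B : PDO R) (m : ℤ) :
    pmul d (-A) B m = - pmul d A B m := by
  rw [pmul_eq_sum (Bnd_neg hA), pmul_eq_sum hA, ← Finset.sum_neg_distrib]
  refine Finset.sum_congr rfl fun i _ => ?_
  rw [← Finset.sum_neg_distrib]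
  refine Finset.sum_congr rfl fun k _ => ?_
  show (_:ℤ) • ((-A i) * _) = _
  rw [neg_mul, smul_neg]

lemma pmul_sum_left {α : Type*} (s : Finset α) (A : α → PDO R) {N : ℕ}
    (hA : ∀ x ∈ s, Bnd (A x) N) (B : PDO R) (m : ℤ) :
    pmul d (∑ x ∈ s, A x) B m = ∑ x ∈ s, pmul d (A x) B m := by
  classical
  induction s using Finset.induction_on with
  | empty => simp [pmul_zero_left]
  | @insert a s ha ih =>
      rw [Finset.sum_insert ha, Finset.sum_insert ha,
        pmul_add_left (hA a (Finset.mem_insert_self a s))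
          (Bnd_sum s A N fun x hx => hA x (Finset.mem_insert_of_mem hx)),
        ih fun x hx => hA x (Finset.mem_insert_of_mem hx)]

lemma pmul_add_right (hd : IsDeriv d) {A : PDO R} {N : ℕ} (hA : Bnd A N)
    (B C : PDO R) (m : ℤ) :
    pmul d A (B + C) m = pmul d A B m + pmul d A C m := by
  rw [pmul_eq_sum hA, pmul_eq_sum hA, pmul_eq_sum hA, ← Finset.sum_add_distrib]
  refine Finset.sum_congr rfl fun i _ => ?_
  rw [← Finset.sum_add_distrib]
  refine Finset.sum_congr rfl fun k _ => ?_
  show (_:ℤ) • (A i * d^[k] ((B _) + (C _))) = _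
  rw [d_iter_add hd, mul_add, smul_add]

lemma Bnd_pmul (hd : IsDeriv d) {A B : PDO R} {N M : ℕ} (hA : Bnd A N) (hB : Bnd B M) :
    Bnd (pmul d A B) (N + M) := by
  intro m hm
  by_contra hcon
  apply hm
  rw [pmul_eq_sum hA]
  apply Finset.sum_eq_zero; intro i hi
  apply Finset.sum_eq_zero; intro k hk
  rw [Finset.mem_range] at hi hk
  by_cases hki : k ≤ i
  · have hBz : B (m - i + k) = 0 := by
      by_contra hBz
      have := hB _ hBz
      push_cast at this hcon ⊢
      omega
    rw [hBz, d_iter_zero hd, mul_zero, smul_zero]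
  · rw [Nat.choose_eq_zero_of_lt (by omega)]
    simp


lemma Bnd_del (hd : IsDeriv d) {X : PDO R} {N : ℕ} (hX : Bnd X N) :
    Bnd (pmul d (term (1:R) 1) X) (N+1) := by
  intro m' hm'
  rw [pmul_del] at hm'
  by_contra hc
  apply hm'
  have h1 : X (m'-1) = 0 := by
    by_contra h; have := hX _ h; push_cast at hc; omega
  have h2 : X m' = 0 := by
    by_contra h; have := hX _ h; push_cast at hc; omega
  rw [h1, h2, d_zero hd, add_zero]

lemma assoc_del (hd : IsDeriv d) {X : PDO R} {N : ℕ} (hX : Bnd X N) (Y : PDO R) (m : ℤ) :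
    pmul d (pmul d (term (1:R) 1) X) Y m = pmul d (term (1:R) 1) (pmul d X Y) m := by
  have hXz : ∀ m' : ℤ, (m' < 0 ∨ (N:ℤ) < m') → X m' = 0 := by
    intro m' h
    by_contra hcon
    have := hX _ hcon
    omega
  set S1 := ∑ i ∈ Finset.range (N+1), ∑ k ∈ Finset.range (N+1),
      ((i.choose k : ℤ)) • (X i * d^[k] (Y (m - 1 - i + k))) with hS1
  set S2 := ∑ i ∈ Finset.range (N+1), ∑ k ∈ Finset.range (N+1),
      ((i.choose k : ℤ)) • (d (X i) * d^[k] (Y (m - i + k))) with hS2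
  set S3 := ∑ i ∈ Finset.range (N+1), ∑ k ∈ Finset.range (N+1),
      ((i.choose k : ℤ)) • (X i * d^[k+1] (Y (m - i + k))) with hS3
  have hR : pmul d (term (1:R) 1) (pmul d X Y) m = S1 + (S2 + S3) := by
    rw [pmul_del]
    congr 1
    · rw [pmul_eq_sum hX, hS1]
    · rw [pmul_eq_sum hX, d_sum hd, hS2, hS3, ← Finset.sum_add_distrib]
      refine Finset.sum_congr rfl fun i _ => ?_
      rw [d_sum hd, ← Finset.sum_add_distrib]
      refine Finset.sum_congr rfl fun k _ => ?_
      rw [d_zsmul hd, hd.2, smul_add]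
      congr 3
      exact (Function.iterate_succ_apply' d k _).symm
  have hL : pmul d (pmul d (term (1:R) 1) X) Y m = S2 + (S1 + S3) := by
    rw [pmul_eq_sum (Bnd_del hd hX)]
    have hexp : ∀ i ∈ Finset.range (N+2), ∀ k ∈ Finset.range (N+2),
        ((i.choose k:ℤ)) • ((pmul d (term (1:R) 1) X) (i:ℤ) * d^[k] (Y (m - i + k))) =
        (i.choose k:ℤ) • (d (X i) * d^[k] (Y (m - i + k)))
          + (i.choose k:ℤ) • (X ((i:ℤ)-1) * d^[k] (Y (m - i + k))) := by
      intro i _ k _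
      rw [pmul_del, add_mul, smul_add, add_comm]
    rw [Finset.sum_congr rfl (fun i hi => Finset.sum_congr rfl
      (fun k hk => hexp i hi k hk))]
    have hsplit : ∀ i ∈ Finset.range (N+2),
        (∑ k ∈ Finset.range (N+2),
          ((i.choose k:ℤ) • (d (X i) * d^[k] (Y (m - i + k)))
            + (i.choose k:ℤ) • (X ((i:ℤ)-1) * d^[k] (Y (m - i + k)))))
        = (∑ k ∈ Finset.range (N+2), (i.choose k:ℤ) • (d (X i) * d^[k] (Y (m - i + k))))
          + ∑ k ∈ Finset.range (N+2), (i.choose k:ℤ) • (X ((i:ℤ)-1) * d^[k] (Y (m - i + k))) := by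
      intro i _
      exact Finset.sum_add_distrib
    rw [Finset.sum_congr rfl hsplit, Finset.sum_add_distrib]
    congr 1
    · -- P2 = S2
      rw [Finset.sum_range_succ]
      have hz : (∑ k ∈ Finset.range (N+2),
          (((N+1).choose k:ℤ) • (d (X ((N+1:ℕ):ℤ)) * d^[k] (Y (m - ((N+1:ℕ):ℤ) + k))))) = 0 := by
        apply Finset.sum_eq_zero
        intro k _
        have hx0 : X ((N+1:ℕ):ℤ) = 0 := hXz _ (by push_cast; omega)
        rw [hx0, d_zero hd, zero_mul, smul_zero]
      rw [hz, add_zero, hS2]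
      refine Finset.sum_congr rfl fun i hi => ?_
      rw [Finset.mem_range] at hi
      rw [Finset.sum_range_succ]
      have hc0 : (i.choose (N+1) : ℤ) = 0 := by
        rw [Nat.choose_eq_zero_of_lt (by omega)]; norm_num
      rw [hc0, zero_smul, add_zero]
    · -- P1 = S1 + S3
      rw [Finset.sum_range_succ']
      have hf0 : (∑ k ∈ Finset.range (N+2),
          ((Nat.choose 0 k:ℤ) • (X (((0:ℕ):ℤ)-1) * d^[k] (Y (m - ((0:ℕ):ℤ) + k))))) = 0 := by
        apply Finset.sum_eq_zero
        intro k _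
        have hx0 : X (((0:ℕ):ℤ)-1) = 0 := hXz _ (Or.inl (by norm_num))
        rw [hx0, zero_mul, smul_zero]
      rw [hf0, add_zero, hS1, hS3, ← Finset.sum_add_distrib]
      refine Finset.sum_congr rfl fun i hi => ?_
      rw [Finset.mem_range] at hi
      -- goal: Σ_{k∈range(N+2)} ((i+1).choose k)•(X(↑(i+1)−1) * d^[k] Y(m−↑(i+1)+k)) = S1_i + S3_i
      have harg0 : (((i+1:ℕ):ℤ)-1) = (i:ℤ) := by push_cast; ring
      have hXi : X (((i+1:ℕ):ℤ)-1) = X (i:ℤ) := by rw [harg0]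
      rw [Finset.sum_range_succ']
      -- peeled k = 0 and shifted k
      have hterm0 : (((i+1).choose 0:ℤ)) • (X (((i+1:ℕ):ℤ)-1) * d^[0] (Y (m - ((i+1:ℕ):ℤ) + (0:ℕ)))) =
          ((i.choose 0:ℤ)) • (X (i:ℤ) * d^[0] (Y (m - 1 - (i:ℤ) + ((0:ℕ):ℤ)))) := by
        have h1 : m - ((i+1:ℕ):ℤ) + ((0:ℕ):ℤ) = m - 1 - (i:ℤ) + ((0:ℕ):ℤ) := by
          push_cast; ring
        rw [hXi, h1, Nat.choose_zero_right, Nat.choose_zero_right]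
      have hshift : ∀ k ∈ Finset.range (N+1),
          (((i+1).choose (k+1):ℤ)) • (X (((i+1:ℕ):ℤ)-1) * d^[k+1] (Y (m - ((i+1:ℕ):ℤ) + ((k+1:ℕ):ℤ)))) =
          ((i.choose (k+1):ℤ)) • (X (i:ℤ) * d^[k+1] (Y (m - 1 - (i:ℤ) + ((k+1:ℕ):ℤ))))
            + ((i.choose k:ℤ)) • (X (i:ℤ) * d^[k+1] (Y (m - (i:ℤ) + (k:ℤ)))) := by
        intro k _
        have h1 : m - ((i+1:ℕ):ℤ) + ((k+1:ℕ):ℤ) = m - (i:ℤ) + (k:ℤ) := by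
          push_cast; ring
        have h2 : m - 1 - (i:ℤ) + ((k+1:ℕ):ℤ) = m - (i:ℤ) + (k:ℤ) := by
          push_cast; ring
        rw [hXi, h1, h2, Nat.choose_succ_succ i k]
        push_cast
        rw [add_smul]
        exact add_comm _ _
      rw [Finset.sum_congr rfl hshift, hterm0, Finset.sum_add_distrib]
      -- now: (T1' + T3) + S1_i0-term  where S1_i , S3_i targets
      -- S1_i = Σ_{k∈range(N+1)} c(i,k)•(X i * d^[k] Y(m−1−i+k))
      -- peel S1_i via sum_range_succ'
      rw [show (∑ k ∈ Finset.range (N+1), (Nat.choose i k:ℤ) • (X (i:ℤ) * d^[k] (Y (m - 1 - (i:ℤ) + (k:ℤ)))))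
          = (∑ k ∈ Finset.range N, (Nat.choose i (k+1):ℤ) • (X (i:ℤ) * d^[k+1] (Y (m - 1 - (i:ℤ) + ((k+1:ℕ):ℤ)))))
            + (Nat.choose i 0:ℤ) • (X (i:ℤ) * d^[0] (Y (m - 1 - (i:ℤ) + ((0:ℕ):ℤ))))
        from Finset.sum_range_succ' _ N]
      rw [show (∑ k ∈ Finset.range (N+1), (Nat.choose i (k+1):ℤ) • (X (i:ℤ) * d^[k+1] (Y (m - 1 - (i:ℤ) + ((k+1:ℕ):ℤ)))))
          = (∑ k ∈ Finset.range N, (Nat.choose i (k+1):ℤ) • (X (i:ℤ) * d^[k+1] (Y (m - 1 - (i:ℤ) + ((k+1:ℕ):ℤ)))))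
            + (Nat.choose i (N+1):ℤ) • (X (i:ℤ) * d^[N+1] (Y (m - 1 - (i:ℤ) + ((N+1:ℕ):ℤ))))
        from Finset.sum_range_succ _ N]
      have hcN : (i.choose (N+1) : ℤ) = 0 := by
        rw [Nat.choose_eq_zero_of_lt (by omega)]; norm_num
      rw [hcN, zero_smul, add_zero]
      ring
  rw [hL, hR]
  ring


lemma term_scaled (c : R) (j : ℤ) : term c j = fun m => c * term (1:R) j m := by
  funext m
  simp [term, mul_ite]

lemma pmul_term_left (hd : IsDeriv d) (c : R) (j : ℕ) (Y : PDO R) (m : ℤ) :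
    pmul d (term c (j:ℤ)) Y m = c * pmul d (term (1:R) (j:ℤ)) Y m := by
  rw [term_scaled c (j:ℤ)]
  exact pmul_scaled_left (Bnd_term 1 j j le_rfl) c Y m

lemma del_term (hd : IsDeriv d) (k : ℕ) :
    pmul d (term (1:R) 1) (term (1:R) (k:ℤ)) = term (1:R) ((k+1:ℕ):ℤ) := by
  funext m
  rw [pmul_del]
  simp only [term]
  rcases eq_or_ne m ((k+1:ℕ):ℤ) with h | h
  · rw [if_pos h, if_pos (by push_cast at h ⊢; omega), if_neg (by push_cast at h ⊢; omega),
      d_zero hd, add_zero]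
  · rw [if_neg h, if_neg (by push_cast at h ⊢; omega)]
    rcases eq_or_ne m (k:ℤ) with h2 | h2
    · rw [if_pos h2, d_one hd, add_zero]
    · rw [if_neg h2, d_zero hd, add_zero]

/-- The remainder sequence `R_k` with `∂^k E = E_k + R_k L`. -/
def Rseq (d : R → R) (V : ℕ → ℕ → R) (n : ℕ) : ℕ → PDO R
  | 0 => 0
  | (k+1) => pmul d (term (1:R) 1) (Rseq d V n k) - term (V k n) 0

lemma Rseq_bnd (hd : IsDeriv d) (V : ℕ → ℕ → R) (n : ℕ) (k : ℕ) :
    Bnd (Rseq d V n k) k := by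
  induction k with
  | zero => exact Bnd_zero 0
  | succ k ih =>
      show Bnd (pmul d (term (1:R) 1) (Rseq d V n k) - term (V k n) 0) (k+1)
      refine Bnd_sub (Bnd_del hd ih) ?_
      simpa using Bnd_term (V k n) 0 (k+1) (by omega)

section Key

variable (hd : IsDeriv d) (n : ℕ) (u : ℕ → R)

/-- the function form of `L`. -/
def Lf (u : ℕ → R) (n : ℕ) : PDO R := fun m =>
  if m = (n:ℤ)+1 then 1 else if 0 ≤ m ∧ m < (n:ℤ) then -(u m.toNat) else 0

/-- the function form of `E_k`. -/
def Ef (V : ℕ → ℕ → R) (n : ℕ) (k : ℕ) : PDO R := fun m =>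
  if 0 ≤ m ∧ m ≤ (n:ℤ) then -(V k m.toNat) else 0

lemma Ef_bnd (V : ℕ → ℕ → R) (n k : ℕ) : Bnd (Ef V n k) n := by
  intro m hm
  rw [Ef] at hm
  by_contra hc
  apply hm
  rw [if_neg (by omega)]

/-- the one-step identity `∂ E_k = E_{k+1} - V^k_n L`. -/
lemma step_E (hd : IsDeriv d) {n : ℕ} (hn : 0 < n) {u : ℕ → R} (hun : u n = 0)
    {V : ℕ → ℕ → R}
    (hrec0 : ∀ k < n, V (k + 1) 0 = d (V k 0) + V k n * u 0)
    (hrecl : ∀ k < n, ∀ l, 1 ≤ l → l ≤ n →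
      V (k + 1) l = d (V k l) + V k (l - 1) + u l * V k n)
    {k : ℕ} (hk : k < n) (m : ℤ) :
    pmul d (term (1:R) 1) (Ef V n k) m = Ef V n (k+1) m - V k n * Lf u n m := by
  rw [pmul_del, Ef, Ef, Ef, Lf]
  rcases lt_or_ge m 0 with h0 | h0
  · rw [if_neg (by omega), if_neg (by omega), if_neg (by omega),
      if_neg (by omega), if_neg (by omega), d_zero hd]
    ring
  rcases eq_or_lt_of_le h0 with h0' | h0'
  · -- m = 0
    have hm0 : m = 0 := h0'.symm
    subst hm0
    rw [if_neg (by omega), if_pos (by constructor <;> omega),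
      if_pos (by constructor <;> omega), if_neg (by omega),
      if_pos (by constructor <;> omega)]
    simp only [Int.toNat_zero]
    rw [d_neg hd, hrec0 k hk]
    ring
  rcases lt_or_ge m ((n:ℤ)+1) with hmn | hmn
  · -- 1 ≤ m ≤ n
    have hm1 : (1:ℤ) ≤ m := h0'
    have hmt : 1 ≤ m.toNat ∧ m.toNat ≤ n := by omega
    rw [if_pos (by omega), if_pos (by omega), if_pos (by omega), if_neg (by omega)]
    have hrw : V (k+1) m.toNat = d (V k m.toNat) + V k (m.toNat - 1) + u m.toNat * V k n :=
      hrecl k hk m.toNat hmt.1 hmt.2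
    have htn : (m-1).toNat = m.toNat - 1 := by omega
    rw [htn, d_neg hd, hrw]
    rcases lt_or_ge m (n:ℤ) with hmn' | hmn'
    · rw [if_pos (by constructor <;> omega)]
      ring
    · have hmeq : m.toNat = n := by omega
      rw [if_neg (by omega), hmeq, hun]
      ring
  rcases eq_or_lt_of_le hmn with hm' | hm'
  · -- m = n+1
    have hm2 : m = (n:ℤ)+1 := hm'.symm
    rw [if_pos (by omega : (0:ℤ) ≤ m - 1 ∧ m - 1 ≤ (n:ℤ)),
        if_neg (by omega : ¬((0:ℤ) ≤ m ∧ m ≤ (n:ℤ))),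
        if_neg (by omega : ¬((0:ℤ) ≤ m ∧ m ≤ (n:ℤ))),
        if_pos hm2]
    have htn : (m-1).toNat = n := by omega
    rw [htn, d_zero hd]
    ring
  · -- m > n+1
    rw [if_neg (by omega), if_neg (by omega), if_neg (by omega), if_neg (by omega),
      if_neg (by omega), d_zero hd]
    ring

/-- the key induction: `∂^k E = E_k + R_k L`. -/
lemma key_lift (hd : IsDeriv d) {n : ℕ} (hn : 0 < n) {u : ℕ → R} (hun : u n = 0)
    {V : ℕ → ℕ → R}
    (hrec0 : ∀ k < n, V (k + 1) 0 = d (V k 0) + V k n * u 0)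
    (hrecl : ∀ k < n, ∀ l, 1 ≤ l → l ≤ n →
      V (k + 1) l = d (V k l) + V k (l - 1) + u l * V k n) :
    ∀ k, k ≤ n → ∀ m : ℤ,
      pmul d (term (1:R) (k:ℤ)) (Ef V n 0) m
        = Ef V n k m + pmul d (Rseq d V n k) (Lf u n) m := by
  intro k
  induction k with
  | zero =>
      intro _ m
      have h0 : pmul d (term (1:R) ((0:ℕ):ℤ)) (Ef V n 0) m = Ef V n 0 m := by
        have := pmul_term0 (d := d) (1:R) (Ef V n 0)
        rw [show ((0:ℕ):ℤ) = (0:ℤ) by norm_num, this]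
        simp only [one_mul]
      rw [h0]
      show _ = _ + pmul d (0 : PDO R) (Lf u n) m
      rw [pmul_zero_left]
      show Ef V n 0 m = Ef V n 0 m + 0
      rw [add_zero]
  | succ k ih =>
      intro hk m
      have hk' : k ≤ n := by omega
      have hkn : k < n := by omega
      have hstep1 : pmul d (term (1:R) ((k+1:ℕ):ℤ)) (Ef V n 0) m
          = pmul d (term (1:R) 1) (pmul d (term (1:R) (k:ℤ)) (Ef V n 0)) m := by
        rw [← del_term hd k]
        exact assoc_del hd (Bnd_term 1 k k le_rfl) (Ef V n 0) m
      rw [hstep1, pmul_del]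
      rw [ih hk' (m-1), ih hk' m]
      rw [hd.1]
      have hEstep := step_E hd hn hun hrec0 hrecl hkn
      -- LHS = (Ef k (m-1) + Rk L (m-1)) + (d(Ef k m) + d(Rk L m))
      -- group: [Ef k (m-1) + d(Ef k m)] + [Rk L (m-1) + d (Rk L m)]
      have hgE : Ef V n k (m-1) + d (Ef V n k m) = pmul d (term (1:R) 1) (Ef V n k) m :=
        (pmul_del _ _).symm
      have hgR : pmul d (Rseq d V n k) (Lf u n) (m-1) + d (pmul d (Rseq d V n k) (Lf u n) m)
          = pmul d (term (1:R) 1) (pmul d (Rseq d V n k) (Lf u n)) m :=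
        (pmul_del _ _).symm
      have hassoc : pmul d (term (1:R) 1) (pmul d (Rseq d V n k) (Lf u n)) m
          = pmul d (pmul d (term (1:R) 1) (Rseq d V n k)) (Lf u n) m :=
        (assoc_del hd (Rseq_bnd hd V n k) (Lf u n) m).symm
      have hRs : pmul d (Rseq d V n (k+1)) (Lf u n) m
          = pmul d (pmul d (term (1:R) 1) (Rseq d V n k)) (Lf u n) m
            - V k n * Lf u n m := by
        show pmul d (pmul d (term (1:R) 1) (Rseq d V n k) - term (V k n) 0) (Lf u n) m = _
        have hsub : pmul d (pmul d (term (1:R) 1) (Rseq d V n k) - term (V k n) 0) (Lf u n) m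
            = pmul d (pmul d (term (1:R) 1) (Rseq d V n k)) (Lf u n) m
              + pmul d (-(term (V k n) 0)) (Lf u n) m := by
          rw [sub_eq_add_neg]
          exact pmul_add_left (Bnd_del hd (Rseq_bnd hd V n k))
            (Bnd_neg (by simpa using Bnd_term (V k n) 0 (k+1) (by omega))) (Lf u n) m
        rw [hsub, pmul_neg_left (by simpa using Bnd_term (V k n) 0 (k+1) (by omega) :
          Bnd (term (V k n) 0) (k+1))]
        have : pmul d (term (V k n) 0) (Lf u n) m = V k n * Lf u n m := by
          rw [pmul_term0]
        rw [this]
        ring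
      calc Ef V n k (m-1) + pmul d (Rseq d V n k) (Lf u n) (m-1)
            + (d (Ef V n k m) + d (pmul d (Rseq d V n k) (Lf u n) m))
          = (Ef V n k (m-1) + d (Ef V n k m))
            + (pmul d (Rseq d V n k) (Lf u n) (m-1)
              + d (pmul d (Rseq d V n k) (Lf u n) m)) := by ring
        _ = pmul d (term (1:R) 1) (Ef V n k) m
            + pmul d (pmul d (term (1:R) 1) (Rseq d V n k)) (Lf u n) m := by
            rw [hgE, hgR, hassoc]
        _ = (Ef V n (k+1) m - V k n * Lf u n m)
            + pmul d (pmul d (term (1:R) 1) (Rseq d V n k)) (Lf u n) m := by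
            rw [hEstep m]
        _ = Ef V n (k+1) m + pmul d (Rseq d V n (k+1)) (Lf u n) m := by
            rw [hRs]; ring

end Key

end GD

open GD in
/-- for matrix liftings `V, W ∈ Γ_Q` (satisfying the recursion (5.9)
with `λ = 0` over the companion matrix `Q`), with first-row operators
`E = -∑_j V^0_j ∂^j` and `F = -∑_j W^0_j ∂^j`, the matrix commutator corresponds to
the operator commutator modulo right multiples of `L`:
`[E,F] - ∑_{l,j} (V^0_j W^j_l - W^0_j V^j_l) ∂^l = R L`
for some differential operator `R`; equivalently
`-ψ([V,W]) = ∑_{l,j}(V^0_j W^j_l - W^0_j V^j_l)∂^l ≡ [E,F] mod L`. -/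
theorem gd_matrix_commutator_mod_L {R : Type} [CommRing R] (d : R → R)
    (hd : GD.IsDeriv d)
    (n : ℕ) (hn : 0 < n) (u : ℕ → R) (hun : u n = 0)
    (V W : ℕ → ℕ → R)
    (hrec0V : ∀ k < n, V (k + 1) 0 = d (V k 0) + V k n * u 0)
    (hreclV : ∀ k < n, ∀ l, 1 ≤ l → l ≤ n →
      V (k + 1) l = d (V k l) + V k (l - 1) + u l * V k n)
    (hrec0W : ∀ k < n, W (k + 1) 0 = d (W k 0) + W k n * u 0)
    (hreclW : ∀ k < n, ∀ l, 1 ≤ l → l ≤ n →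
      W (k + 1) l = d (W k l) + W k (l - 1) + u l * W k n)
    (htrV : ∑ k ∈ Finset.range (n + 1), V k k = 0)
    (htrW : ∑ k ∈ Finset.range (n + 1), W k k = 0)
    (L E F : PDO R)
    (hL : L = term 1 ((n : ℤ) + 1) - ∑ j ∈ Finset.range n, term (u j) (j : ℤ))
    (hE : E = - ∑ j ∈ Finset.range (n + 1), term (V 0 j) (j : ℤ))
    (hF : F = - ∑ j ∈ Finset.range (n + 1), term (W 0 j) (j : ℤ)) :
    ∃ Rop : PDO R, (∀ m : ℤ, m < 0 → Rop m = 0) ∧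
      (∃ N : ℤ, ∀ m : ℤ, N < m → Rop m = 0) ∧
      pmul d E F - pmul d F E
        - (∑ l ∈ Finset.range (n + 1),
            term (∑ j ∈ Finset.range (n + 1),
              (V 0 j * W j l - W 0 j * V j l)) (l : ℤ))
        = pmul d Rop L := by
  classical
  -- function forms
  have hEf : E = Ef V n 0 := by
    funext m
    rw [hE, Pi.neg_apply, sum_term_apply]
    simp only [Ef]
    by_cases h : 0 ≤ m ∧ m ≤ (n:ℤ)
    · rw [if_pos (by omega : 0 ≤ m ∧ m < ((n+1:ℕ):ℤ)), if_pos h]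
    · rw [if_neg (by omega : ¬(0 ≤ m ∧ m < ((n+1:ℕ):ℤ))), if_neg h, neg_zero]
  have hFf : F = Ef W n 0 := by
    funext m
    rw [hF, Pi.neg_apply, sum_term_apply]
    simp only [Ef]
    by_cases h : 0 ≤ m ∧ m ≤ (n:ℤ)
    · rw [if_pos (by omega : 0 ≤ m ∧ m < ((n+1:ℕ):ℤ)), if_pos h]
    · rw [if_neg (by omega : ¬(0 ≤ m ∧ m < ((n+1:ℕ):ℤ))), if_neg h, neg_zero]
  have hLf : L = Lf u n := by
    funext m
    rw [hL, Pi.sub_apply, sum_term_apply]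
    simp only [Lf, term]
    by_cases h1 : m = (n:ℤ)+1
    · rw [if_pos h1, if_pos h1, if_neg (by omega : ¬(0 ≤ m ∧ m < ((n:ℕ):ℤ))), sub_zero]
    · rw [if_neg h1, if_neg h1]
      by_cases h2 : 0 ≤ m ∧ m < (n:ℤ)
      · rw [if_pos h2, if_pos h2, zero_sub]
      · rw [if_neg h2, if_neg h2, sub_zero]
  have hKV := key_lift hd hn hun hrec0V hreclV
  have hKW := key_lift hd hn hun hrec0W hreclW
  -- the remainder operator
  set Rop : PDO R := ∑ j ∈ Finset.range (n+1),
      ((fun m => W 0 j * Rseq d V n j m) + (fun m => (-(V 0 j)) * Rseq d W n j m))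
    with hRopDef
  have hBsummand : ∀ j ∈ Finset.range (n+1),
      Bnd ((fun m => W 0 j * Rseq d V n j m) + (fun m => (-(V 0 j)) * Rseq d W n j m)) n := by
    intro j hj
    rw [Finset.mem_range] at hj
    exact Bnd_add (Bnd_scaled _ ((Rseq_bnd hd V n j).mono (by omega)))
      (Bnd_scaled _ ((Rseq_bnd hd W n j).mono (by omega)))
  have hRopBnd : Bnd Rop n := Bnd_sum _ _ n hBsummand
  refine ⟨Rop, ?_, ⟨(n:ℤ), ?_⟩, ?_⟩
  · intro m hm
    by_contra h
    have := hRopBnd m h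
    omega
  · intro m hm
    by_contra h
    have := hRopBnd m h
    omega
  · -- the main identity
    have hBV : ∀ j ∈ Finset.range (n+1), Bnd (term (V 0 j) (j:ℤ)) n := by
      intro j hj
      rw [Finset.mem_range] at hj
      exact Bnd_term _ _ _ (by omega)
    have hBW : ∀ j ∈ Finset.range (n+1), Bnd (term (W 0 j) (j:ℤ)) n := by
      intro j hj
      rw [Finset.mem_range] at hj
      exact Bnd_term _ _ _ (by omega)
    funext m
    simp only [Pi.sub_apply]
    have hEF : pmul d E F m = -(∑ j ∈ Finset.range (n+1),
        V 0 j * (Ef W n j m + pmul d (Rseq d W n j) (Lf u n) m)) := by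
      rw [hE, hFf, pmul_neg_left (Bnd_sum _ _ n hBV),
        pmul_sum_left _ _ hBV]
      congr 1
      refine Finset.sum_congr rfl fun j hj => ?_
      rw [Finset.mem_range] at hj
      rw [pmul_term_left hd, hKW j (by omega) m]
    have hFE : pmul d F E m = -(∑ j ∈ Finset.range (n+1),
        W 0 j * (Ef V n j m + pmul d (Rseq d V n j) (Lf u n) m)) := by
      rw [hF, hEf, pmul_neg_left (Bnd_sum _ _ n hBW),
        pmul_sum_left _ _ hBW]
      congr 1
      refine Finset.sum_congr rfl fun j hj => ?_
      rw [Finset.mem_range] at hj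
      rw [pmul_term_left hd, hKV j (by omega) m]
    have hRopL : pmul d Rop L m = ∑ j ∈ Finset.range (n+1),
        (W 0 j * pmul d (Rseq d V n j) (Lf u n) m
          + (-(V 0 j)) * pmul d (Rseq d W n j) (Lf u n) m) := by
      rw [hLf, hRopDef, pmul_sum_left _ _ hBsummand]
      refine Finset.sum_congr rfl fun j hj => ?_
      rw [Finset.mem_range] at hj
      rw [pmul_add_left (N := n) (Bnd_scaled _ ((Rseq_bnd hd V n j).mono (by omega : j ≤ n)))
        (Bnd_scaled _ ((Rseq_bnd hd W n j).mono (by omega : j ≤ n))),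
        pmul_scaled_left ((Rseq_bnd hd V n j).mono (by omega : j ≤ n)),
        pmul_scaled_left ((Rseq_bnd hd W n j).mono (by omega : j ≤ n))]
    have hT : (∑ l ∈ Finset.range (n + 1),
        term (∑ j ∈ Finset.range (n + 1),
          (V 0 j * W j l - W 0 j * V j l)) (l : ℤ)) m
        = ∑ j ∈ Finset.range (n+1), (W 0 j * Ef V n j m - V 0 j * Ef W n j m) := by
      rw [sum_term_apply]
      by_cases h : 0 ≤ m ∧ m ≤ (n:ℤ)
      · rw [if_pos (by omega : 0 ≤ m ∧ m < ((n+1:ℕ):ℤ))]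
        refine Finset.sum_congr rfl fun j _ => ?_
        simp only [Ef]
        rw [if_pos h, if_pos h]
        ring
      · rw [if_neg (by omega : ¬(0 ≤ m ∧ m < ((n+1:ℕ):ℤ)))]
        refine (Finset.sum_eq_zero fun j _ => ?_).symm
        simp only [Ef]
        rw [if_neg h, if_neg h]
        ring
    rw [hEF, hFE, hRopL, hT]
    have hcomb : ∑ j ∈ Finset.range (n+1),
        (W 0 j * (Ef V n j m + pmul d (Rseq d V n j) (Lf u n) m)
          - V 0 j * (Ef W n j m + pmul d (Rseq d W n j) (Lf u n) m)
          - (W 0 j * Ef V n j m - V 0 j * Ef W n j m))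
        = ∑ j ∈ Finset.range (n+1),
          (W 0 j * pmul d (Rseq d V n j) (Lf u n) m
            + (-(V 0 j)) * pmul d (Rseq d W n j) (Lf u n) m) :=
      Finset.sum_congr rfl fun j _ => by ring
    have h1 : ∑ j ∈ Finset.range (n+1),
        (W 0 j * (Ef V n j m + pmul d (Rseq d V n j) (Lf u n) m)
          - V 0 j * (Ef W n j m + pmul d (Rseq d W n j) (Lf u n) m)
          - (W 0 j * Ef V n j m - V 0 j * Ef W n j m))
        = ∑ j ∈ Finset.range (n+1),
            (W 0 j * (Ef V n j m + pmul d (Rseq d V n j) (Lf u n) m)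
              - V 0 j * (Ef W n j m + pmul d (Rseq d W n j) (Lf u n) m))
          - ∑ j ∈ Finset.range (n+1), (W 0 j * Ef V n j m - V 0 j * Ef W n j m) := by
      rw [Finset.sum_sub_distrib]
    have h2 : ∑ j ∈ Finset.range (n+1),
        (W 0 j * (Ef V n j m + pmul d (Rseq d V n j) (Lf u n) m)
          - V 0 j * (Ef W n j m + pmul d (Rseq d W n j) (Lf u n) m))
        = ∑ j ∈ Finset.range (n+1),
            W 0 j * (Ef V n j m + pmul d (Rseq d V n j) (Lf u n) m)
          - ∑ j ∈ Finset.range (n+1),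
            V 0 j * (Ef W n j m + pmul d (Rseq d W n j) (Lf u n) m) := by
      rw [Finset.sum_sub_distrib]
    linear_combination hcomb - h1 - h2
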